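/- Let φ, F₁, F₂ be measurable with 0 ≤ φ ≤ 1, F₁ ≥ 0, F₂ ≥ 0 and ∫ min{F₁,F₂} dμ < ∞. Then ∫ (φ·F₁ + (1−φ)·F₂) dμ = ∫ min{F₁,F₂} dμ if and only if the indicator of {F₁ < F₂} ≤ φ ≤ the indicator of {F₁ ≤ F₂} holds μ-almost everywhere. -/
import Mathlib


open MeasureTheory

/-- Lemma 1 (equality case): equality holds in the inequality
`∫ (φ·F₁ + (1−φ)·F₂) dμ ≥ ∫ min{F₁,F₂} dμ` if and only if
`I_{F₁ < F₂} ≤ φ ≤ I_{F₁ ≤ F₂}` μ-almost everywhere. -/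
theorem stmt1 {X : Type*} [MeasurableSpace X] (μ : Measure X) [SigmaFinite μ]
    (φ F₁ F₂ : X → ℝ) (hφm : Measurable φ) (hF₁m : Measurable F₁) (hF₂m : Measurable F₂)
    (hφ0 : ∀ x, 0 ≤ φ x) (hφ1 : ∀ x, φ x ≤ 1)
    (hF₁0 : ∀ x, 0 ≤ F₁ x) (hF₂0 : ∀ x, 0 ≤ F₂ x)
    (hmin : ∫⁻ x, ENNReal.ofReal (min (F₁ x) (F₂ x)) ∂μ < ⊤) :
    (∫⁻ x, ENNReal.ofReal (φ x * F₁ x + (1 - φ x) * F₂ x) ∂μ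
        = ∫⁻ x, ENNReal.ofReal (min (F₁ x) (F₂ x)) ∂μ)
      ↔ (∀ᵐ x ∂μ,
          Set.indicator {x | F₁ x < F₂ x} (fun _ => (1 : ℝ)) x ≤ φ x
            ∧ φ x ≤ Set.indicator {x | F₁ x ≤ F₂ x} (fun _ => (1 : ℝ)) x) := by
  set g : X → ℝ := fun x => φ x * F₁ x + (1 - φ x) * F₂ x with hg
  set m : X → ℝ := fun x => min (F₁ x) (F₂ x) with hm
  -- pointwise equivalence of the sandwich condition with g x = m x
  have key : ∀ x,
      (Set.indicator {x | F₁ x < F₂ x} (fun _ => (1 : ℝ)) x ≤ φ x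
        ∧ φ x ≤ Set.indicator {x | F₁ x ≤ F₂ x} (fun _ => (1 : ℝ)) x)
      ↔ g x = m x := by
    intro x
    rcases lt_trichotomy (F₁ x) (F₂ x) with h | h | h
    · have h1 : Set.indicator {x | F₁ x < F₂ x} (fun _ => (1 : ℝ)) x = 1 :=
        Set.indicator_of_mem (s := {x | F₁ x < F₂ x}) h _
      have h2 : Set.indicator {x | F₁ x ≤ F₂ x} (fun _ => (1 : ℝ)) x = 1 :=
        Set.indicator_of_mem (s := {x | F₁ x ≤ F₂ x}) h.le _
      rw [h1, h2]
      have hmx : m x = F₁ x := min_eq_left h.le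
      constructor
      · rintro ⟨h3, _⟩
        have : φ x = 1 := le_antisymm (hφ1 x) h3
        simp only [hg, this, hmx]; ring
      · intro he
        have : (1 - φ x) * (F₂ x - F₁ x) = 0 := by
          simp only [hg, hmx] at he; nlinarith
        have : φ x = 1 := by
          rcases mul_eq_zero.1 this with h' | h'
          · linarith
          · exfalso; nlinarith
        exact ⟨this.ge, this.le⟩
    · have h2 : Set.indicator {x | F₁ x ≤ F₂ x} (fun _ => (1 : ℝ)) x = 1 :=
        Set.indicator_of_mem (s := {x | F₁ x ≤ F₂ x}) h.le _
      have h1 : Set.indicator {x | F₁ x < F₂ x} (fun _ => (1 : ℝ)) x = 0 :=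
        Set.indicator_of_notMem (s := {x | F₁ x < F₂ x}) (by simp [h]) _
      rw [h1, h2]
      have hmx : m x = F₁ x := min_eq_left h.le
      constructor
      · intro _
        simp only [hg, hmx, ← h]; ring
      · intro _; exact ⟨hφ0 x, hφ1 x⟩
    · have h1 : Set.indicator {x | F₁ x < F₂ x} (fun _ => (1 : ℝ)) x = 0 :=
        Set.indicator_of_notMem (s := {x | F₁ x < F₂ x}) (not_lt.2 h.le) _
      have h2 : Set.indicator {x | F₁ x ≤ F₂ x} (fun _ => (1 : ℝ)) x = 0 :=
        Set.indicator_of_notMem (s := {x | F₁ x ≤ F₂ x}) (not_le.2 h) _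
      rw [h1, h2]
      have hmx : m x = F₂ x := min_eq_right h.le
      constructor
      · rintro ⟨_, h3⟩
        have : φ x = 0 := le_antisymm h3 (hφ0 x)
        simp only [hg, this, hmx]; ring
      · intro he
        have : φ x * (F₁ x - F₂ x) = 0 := by
          simp only [hg, hmx] at he; nlinarith
        have : φ x = 0 := by
          rcases mul_eq_zero.1 this with h' | h'
          · exact h'
          · exfalso; nlinarith
        exact ⟨hφ0 x, this.le⟩
  have hle : ∀ x, m x ≤ g x := by
    intro x
    have h1 := min_le_left (F₁ x) (F₂ x)
    have h2 := min_le_right (F₁ x) (F₂ x)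
    simp only [hg, hm] at *
    nlinarith [hφ0 x, hφ1 x]
  have hg0 : ∀ x, 0 ≤ g x := fun x => le_trans (le_min (hF₁0 x) (hF₂0 x)) (hle x)
  have hm0 : ∀ x, 0 ≤ m x := fun x => le_min (hF₁0 x) (hF₂0 x)
  have mgm : Measurable g := (hφm.mul hF₁m).add ((measurable_const.sub hφm).mul hF₂m)
  have mmm : Measurable m := hF₁m.min hF₂m
  have mf : Measurable (fun x => ENNReal.ofReal (g x)) := mgm.ennreal_ofReal
  have mh : Measurable (fun x => ENNReal.ofReal (m x)) := mmm.ennreal_ofReal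
  rw [Filter.eventually_congr (Filter.Eventually.of_forall key)]
  constructor
  · intro heq
    have hsub := lintegral_sub mh hmin.ne
      (Filter.Eventually.of_forall fun x => ENNReal.ofReal_le_ofReal (hle x))
    rw [heq, tsub_self] at hsub
    have hz := (lintegral_eq_zero_iff (mf.sub mh)).1 hsub
    filter_upwards [hz] with x hx
    simp only [Pi.sub_apply, Pi.zero_apply, tsub_eq_zero_iff_le] at hx
    have := (ENNReal.ofReal_le_ofReal_iff (hm0 x)).1 hx
    exact le_antisymm this (hle x)
  · intro h
    exact lintegral_congr_ae (h.mono fun x hx => congrArg ENNReal.ofReal hx)
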